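/- For the hyperbolic discount function S(t) = (1 + t)^{−α} with α > 0, preference reversal can occur: there exist rewards 0 < r₁ < r₂ and delays 0 ≤ t₁ < t₂ such that S(t₁) r₁ > S(t₂) r₂ (the smaller-sooner reward is preferred at time 0), yet for all sufficiently large shifts s, S(t₁ + s) r₁ < S(t₂ + s) r₂ (the larger-later reward is preferred after shifting both delays by s). -/
import Mathlib


open Real

/-- Preference reversal under hyperbolic discounting `S(t) = (1 + t)^(-α)`: there are
rewards `0 < r₁ < r₂` and delays `0 ≤ t₁ < t₂` such that the smaller-sooner reward
is preferred initially, yet for all sufficiently large common shifts `s` the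
larger-later reward is preferred. -/
theorem hyperbolic_preference_reversal (α : ℝ) (hα : 0 < α)
    (S : ℝ → ℝ) (hS : ∀ t, S t = (1 + t) ^ (-α)) :
    ∃ r₁ r₂ t₁ t₂ : ℝ, 0 < r₁ ∧ r₁ < r₂ ∧ 0 ≤ t₁ ∧ t₁ < t₂ ∧
      S t₁ * r₁ > S t₂ * r₂ ∧
      ∃ s₀ : ℝ, ∀ s, s₀ ≤ s → S (t₁ + s) * r₁ < S (t₂ + s) * r₂ := by
  have h2 : (0:ℝ) < (2:ℝ) ^ (-α) := rpow_pos_of_pos (by norm_num) _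
  have h2lt : (2:ℝ) ^ (-α) < 1 :=
    rpow_lt_one_of_one_lt_of_neg (by norm_num) (by linarith)
  set c : ℝ := ((2:ℝ) ^ (-α) + 1) / 2 with hc
  have hc0 : 0 < c := by positivity
  have hc1 : c < 1 := by rw [hc]; linarith
  have hc2 : (2:ℝ) ^ (-α) < c := by rw [hc]; linarith
  set β : ℝ := c ^ (1/α) with hβ
  have hβ0 : 0 < β := rpow_pos_of_pos hc0 _
  have hβ1 : β < 1 := rpow_lt_one hc0.le hc1 (by positivity)
  have hβα : β ^ α = c := by
    rw [hβ, ← rpow_mul hc0.le, one_div, inv_mul_cancel₀ hα.ne', rpow_one]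
  refine ⟨c, 1, 0, 1, hc0, hc1, le_refl 0, by norm_num, ?_, 1/(1-β), ?_⟩
  · rw [hS, hS]
    norm_num
    exact hc2
  · intro s hs
    have h1β : 0 < 1 - β := by linarith
    have hs0 : 0 < s := lt_of_lt_of_le (by positivity) hs
    have hx : (0:ℝ) < 1 + s := by linarith
    have hy : (0:ℝ) < 2 + s := by linarith
    rw [hS, hS]
    have hkey : β < (1 + s) / (2 + s) := by
      rw [lt_div_iff₀ hy]
      have := (div_le_iff₀ h1β).mp hs
      nlinarith
    have hratio : c < ((1 + s) / (2 + s)) ^ α := by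
      calc c = β ^ α := hβα.symm
      _ < ((1 + s) / (2 + s)) ^ α := rpow_lt_rpow hβ0.le hkey hα
    have hdiv : ((1 + s) / (2 + s)) ^ α = (1 + s) ^ α / (2 + s) ^ α :=
      div_rpow hx.le hy.le α
    have hxα : (0:ℝ) < (1 + s) ^ α := rpow_pos_of_pos hx _
    have hyα : (0:ℝ) < (2 + s) ^ α := rpow_pos_of_pos hy _
    rw [hdiv] at hratio
    have hneg1 : (1 + (0 + s)) ^ (-α) = ((1 + s) ^ α)⁻¹ := by
      rw [show (1 + (0 + s)) = 1 + s by ring, rpow_neg hx.le]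
    have hneg2 : (1 + (1 + s)) ^ (-α) = ((2 + s) ^ α)⁻¹ := by
      rw [show (1 + (1 + s)) = 2 + s by ring, rpow_neg hy.le]
    rw [hneg1, hneg2]
    rw [lt_div_iff₀ hyα] at hratio
    rw [mul_one, inv_eq_one_div, inv_eq_one_div, div_mul_eq_mul_div,
      div_lt_div_iff₀ hxα hyα]
    nlinarith
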